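/- Suppose (Θ̂₁,…,Θ̂_T) is a tuple of positive definite p×p real matrices that minimizes the adaptive GFlsL objective G_a over all tuples of positive definite p×p real matrices, and suppose that for some integers 1 ≤ s < t ≤ T+1 there is a matrix Σ̂ with Θ̂_r = Σ̂ for all s ≤ r ≤ t−1. With the additional convention ξ_{2,T+1} := 0, one has ‖Σ̂ − (1/(t−s))·∑_{r=s}^{t−1} X_r X_rᵀ‖_F ≤ (T/(t−s))·λ₂·(ξ_{2s} + ξ_{2t}) + λ₁·T·√(p(p−1))·max_{s ≤ r ≤ t−1} max_{u≠v} ξ_{uv,1r}. -/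

import Mathlib

open Matrix Finset

/-- Frobenius norm of a real `p × p` matrix. -/
noncomputable def frob {p : ℕ} (A : Matrix (Fin p) (Fin p) ℝ) : ℝ :=
  Real.sqrt (∑ u, ∑ v, (A u v) ^ 2)

/-- The adaptive GFlsL objective, with time indices `t = 1, …, T`, entrywise LASSO
weights `ξ1 u v t` (for `u ≠ v`) and fused weights `ξ2 t`. -/
noncomputable def gflslA (p T : ℕ) (X : ℕ → Fin p → ℝ) (lam1 lam2 : ℝ)
    (ξ1 : Fin p → Fin p → ℕ → ℝ) (ξ2 : ℕ → ℝ)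
    (Θ : ℕ → Matrix (Fin p) (Fin p) ℝ) : ℝ :=
  (1 / (2 * (T : ℝ))) *
      ∑ t ∈ Finset.Icc 1 T,
        ((Θ t)ᵀ * Θ t - (Matrix.vecMulVec (X t) (X t))ᵀ * Θ t
          - (Θ t)ᵀ * Matrix.vecMulVec (X t) (X t)).trace
    + lam1 * ∑ t ∈ Finset.Icc 1 T, ∑ u, ∑ v,
        (if u ≠ v then ξ1 u v t * |Θ t u v| else 0)
    + lam2 * ∑ t ∈ Finset.Icc 2 T, ξ2 t * frob (Θ t - Θ (t - 1))

namespace Stmt8Aux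
variable {p : ℕ}

noncomputable def flat (A : Matrix (Fin p) (Fin p) ℝ) : EuclideanSpace ℝ (Fin p × Fin p) :=
  (WithLp.equiv 2 _).symm (fun x => A x.1 x.2)

lemma flat_add (A B : Matrix (Fin p) (Fin p) ℝ) : flat (A + B) = flat A + flat B := rfl
lemma flat_sub (A B : Matrix (Fin p) (Fin p) ℝ) : flat (A - B) = flat A - flat B := rfl
lemma flat_smul (c : ℝ) (A : Matrix (Fin p) (Fin p) ℝ) : flat (c • A) = c • flat A := rfl
lemma flat_neg (A : Matrix (Fin p) (Fin p) ℝ) : flat (-A) = - flat A := rfl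

lemma frob_eq_norm (A : Matrix (Fin p) (Fin p) ℝ) : frob A = ‖flat A‖ := by
  rw [EuclideanSpace.norm_eq, frob]
  congr 1
  rw [show (∑ i : Fin p × Fin p, ‖flat A i‖ ^ 2) = ∑ u, ∑ v, ‖flat A (u, v)‖ ^ 2 from
    Fintype.sum_prod_type _]
  exact Finset.sum_congr rfl fun u _ => Finset.sum_congr rfl fun v _ => by
    rw [Real.norm_eq_abs, sq_abs]; rfl

lemma frob_nonneg (A : Matrix (Fin p) (Fin p) ℝ) : 0 ≤ frob A := Real.sqrt_nonneg _

lemma frob_add_le (A B : Matrix (Fin p) (Fin p) ℝ) : frob (A + B) ≤ frob A + frob B := by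
  rw [frob_eq_norm, frob_eq_norm, frob_eq_norm, flat_add]; exact norm_add_le _ _

lemma frob_sub_le (A B : Matrix (Fin p) (Fin p) ℝ) : frob (A - B) ≤ frob A + frob B := by
  rw [frob_eq_norm, frob_eq_norm, frob_eq_norm, flat_sub]; exact norm_sub_le _ _

lemma frob_smul (c : ℝ) (A : Matrix (Fin p) (Fin p) ℝ) : frob (c • A) = |c| * frob A := by
  rw [frob_eq_norm, frob_eq_norm, flat_smul, norm_smul, Real.norm_eq_abs]

lemma frob_neg (A : Matrix (Fin p) (Fin p) ℝ) : frob (-A) = frob A := by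
  rw [frob_eq_norm, frob_eq_norm, flat_neg, norm_neg]

noncomputable def mip (A B : Matrix (Fin p) (Fin p) ℝ) : ℝ := ∑ u, ∑ v, A u v * B u v

lemma mip_comm (A B : Matrix (Fin p) (Fin p) ℝ) : mip A B = mip B A := by
  unfold mip; exact Finset.sum_congr rfl fun u _ => Finset.sum_congr rfl fun v _ => mul_comm _ _

lemma mip_add_left (A B C : Matrix (Fin p) (Fin p) ℝ) : mip (A + B) C = mip A C + mip B C := by
  unfold mip; rw [← Finset.sum_add_distrib]
  exact Finset.sum_congr rfl fun u _ => by
    rw [← Finset.sum_add_distrib]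
    exact Finset.sum_congr rfl fun v _ => by simp [Matrix.add_apply, add_mul]

lemma mip_add_right (A B C : Matrix (Fin p) (Fin p) ℝ) : mip A (B + C) = mip A B + mip A C := by
  rw [mip_comm, mip_add_left, mip_comm B A, mip_comm C A]

lemma mip_smul_left (c : ℝ) (A B : Matrix (Fin p) (Fin p) ℝ) : mip (c • A) B = c * mip A B := by
  unfold mip; rw [Finset.mul_sum]
  exact Finset.sum_congr rfl fun u _ => by
    rw [Finset.mul_sum]
    exact Finset.sum_congr rfl fun v _ => by simp [Matrix.smul_apply, mul_assoc]

lemma mip_smul_right (c : ℝ) (A B : Matrix (Fin p) (Fin p) ℝ) : mip A (c • B) = c * mip A B := by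
  rw [mip_comm, mip_smul_left, mip_comm]

lemma mip_neg_left (A B : Matrix (Fin p) (Fin p) ℝ) : mip (-A) B = - mip A B := by
  have := mip_smul_left (-1) A B; simpa using this

lemma mip_neg_right (A B : Matrix (Fin p) (Fin p) ℝ) : mip A (-B) = - mip A B := by
  rw [mip_comm, mip_neg_left, mip_comm]

lemma mip_sum_left {ι : Type*} (sr : Finset ι) (f : ι → Matrix (Fin p) (Fin p) ℝ)
    (B : Matrix (Fin p) (Fin p) ℝ) : mip (∑ r ∈ sr, f r) B = ∑ r ∈ sr, mip (f r) B := by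
  classical
  induction sr using Finset.induction_on with
  | empty => simp [mip]
  | insert a sr' h ih => rw [Finset.sum_insert h, Finset.sum_insert h, mip_add_left, ih]

lemma mip_self (A : Matrix (Fin p) (Fin p) ℝ) : mip A A = ∑ u, ∑ v, (A u v) ^ 2 := by
  unfold mip; exact Finset.sum_congr rfl fun u _ => Finset.sum_congr rfl fun v _ => (sq _).symm

lemma mip_self_eq_frob_sq (A : Matrix (Fin p) (Fin p) ℝ) : mip A A = (frob A) ^ 2 := by
  rw [frob, Real.sq_sqrt, mip_self]
  exact Finset.sum_nonneg fun u _ => Finset.sum_nonneg fun v _ => sq_nonneg _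

lemma trace_expand (A B : Matrix (Fin p) (Fin p) ℝ) :
    (Aᵀ * A - Bᵀ * A - Aᵀ * B).trace = mip A A - 2 * mip B A := by
  have key : ∀ X Y : Matrix (Fin p) (Fin p) ℝ, (Xᵀ * Y).trace = mip X Y := by
    intro X Y
    rw [Matrix.trace]
    unfold mip
    rw [Finset.sum_comm]
    exact Finset.sum_congr rfl fun u _ => by
      simp [Matrix.diag, Matrix.mul_apply, Matrix.transpose_apply]
  rw [Matrix.trace_sub, Matrix.trace_sub, key, key, key, mip_comm A B]
  ring

lemma mip_quad (Sm Dm Sr : Matrix (Fin p) (Fin p) ℝ) (ε : ℝ) :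
    mip (Sm + ε • Dm) (Sm + ε • Dm) - 2 * mip Sr (Sm + ε • Dm)
      = (mip Sm Sm - 2 * mip Sr Sm)
        + (2 * ε * mip Sm Dm + ε ^ 2 * mip Dm Dm - 2 * ε * mip Sr Dm) := by
  simp only [mip_add_left, mip_add_right, mip_smul_left, mip_smul_right]
  rw [mip_comm Dm Sm]
  ring

/-- Cauchy–Schwarz bound for the off-diagonal absolute sum. -/
lemma sum_offdiag_abs_le (D : Matrix (Fin p) (Fin p) ℝ) :
    (∑ u, ∑ v, (if u ≠ v then |D u v| else 0))
      ≤ Real.sqrt ((p : ℝ) * ((p : ℝ) - 1)) * frob D := by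
  set A1 : Matrix (Fin p) (Fin p) ℝ := Matrix.of fun u v => if u ≠ v then (1 : ℝ) else 0 with hA1
  set B1 : Matrix (Fin p) (Fin p) ℝ := Matrix.of fun u v => |D u v| with hB1
  have hinner : (inner ℝ (flat A1) (flat B1) : ℝ)
      = ∑ u, ∑ v, (if u ≠ v then |D u v| else 0) := by
    rw [PiLp.inner_apply]
    rw [show (∑ i : Fin p × Fin p, inner ℝ (flat A1 i) (flat B1 i) : ℝ)
        = ∑ u, ∑ v, (inner ℝ (flat A1 (u, v)) (flat B1 (u, v)) : ℝ) from Fintype.sum_prod_type _]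
    refine Finset.sum_congr rfl fun u _ => Finset.sum_congr rfl fun v _ => ?_
    rw [Real.inner_apply]
    show A1 u v * B1 u v = _
    by_cases h : u = v <;> simp [hA1, hB1, h]
  have hnA : ‖flat A1‖ = Real.sqrt ((p : ℝ) * ((p : ℝ) - 1)) := by
    rw [← frob_eq_norm, frob]
    congr 1
    have hrow : ∀ u : Fin p, (∑ v, (A1 u v) ^ 2) = (p : ℝ) - 1 := by
      intro u
      have : ∀ v, (A1 u v) ^ 2 = 1 - (if u = v then (1:ℝ) else 0) := by
        intro v; by_cases h : u = v <;> simp [hA1, h]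
      rw [Finset.sum_congr rfl fun v _ => this v, Finset.sum_sub_distrib]
      simp [Finset.card_univ]
    rw [Finset.sum_congr rfl fun u _ => hrow u]
    simp [Finset.card_univ]; ring
  have hnB : ‖flat B1‖ = frob D := by
    rw [← frob_eq_norm, frob, frob]
    congr 1
    exact Finset.sum_congr rfl fun u _ => Finset.sum_congr rfl fun v _ => by
      simp [hB1, sq_abs]
  calc (∑ u, ∑ v, (if u ≠ v then |D u v| else 0)) = inner ℝ (flat A1) (flat B1) := hinner.symm
    _ ≤ ‖flat A1‖ * ‖flat B1‖ := real_inner_le_norm _ _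
    _ = Real.sqrt ((p : ℝ) * ((p : ℝ) - 1)) * frob D := by rw [hnA, hnB]

lemma posSemidef_vecMulVec (x : Fin p → ℝ) : (Matrix.vecMulVec x x).PosSemidef := by
  refine Matrix.PosSemidef.of_dotProduct_mulVec_nonneg ?_ ?_
  · ext u v
    simp [Matrix.vecMulVec_apply, Matrix.conjTranspose_apply, mul_comm]
  · intro y
    have : dotProduct (star y) (Matrix.vecMulVec x x *ᵥ y) = (∑ u, y u * x u) ^ 2 := by
      simp only [star_trivial, dotProduct, Matrix.mulVec, Matrix.vecMulVec_apply]
      rw [sq, Finset.sum_mul_sum]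
      refine Finset.sum_congr rfl fun u _ => ?_
      rw [Finset.mul_sum]
      refine Finset.sum_congr rfl fun v _ => ?_
      show y u * (x u * x v * y v) = _
      ring
    rw [this]; positivity

lemma posSemidef_smul {A : Matrix (Fin p) (Fin p) ℝ} (hA : A.PosSemidef) {c : ℝ} (hc : 0 ≤ c) :
    (c • A).PosSemidef := by
  refine Matrix.PosSemidef.of_dotProduct_mulVec_nonneg ?_ fun x => ?_
  · unfold Matrix.IsHermitian
    rw [Matrix.conjTranspose_smul, hA.1]; simp
  · rw [Matrix.smul_mulVec, dotProduct_smul, smul_eq_mul]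
    exact mul_nonneg hc (hA.dotProduct_mulVec_nonneg x)

lemma posDef_smul {A : Matrix (Fin p) (Fin p) ℝ} (hA : A.PosDef) {c : ℝ} (hc : 0 < c) :
    (c • A).PosDef := by
  refine Matrix.PosDef.of_dotProduct_mulVec_pos ?_ fun x hx => ?_
  · unfold Matrix.IsHermitian
    rw [Matrix.conjTranspose_smul, hA.1]; simp
  · rw [Matrix.smul_mulVec, dotProduct_smul, smul_eq_mul]
    exact mul_pos hc (hA.dotProduct_mulVec_pos hx)

end Stmt8Aux

open Stmt8Aux

set_option maxHeartbeats 2000000 in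
/-- if a minimizer of the adaptive GFlsL objective over positive definite
tuples is constant on a block `{s, …, t-1}`, the common block value deviates from the
block sample second moment by at most the stated bound in Frobenius norm. -/
theorem stmt8 (p T : ℕ) (hp : 1 ≤ p) (hT : 1 ≤ T)
    (X : ℕ → Fin p → ℝ) (lam1 lam2 : ℝ) (hlam1 : 0 ≤ lam1) (hlam2 : 0 < lam2)
    (ξ1 : Fin p → Fin p → ℕ → ℝ)
    (hξ1 : ∀ u v : Fin p, u ≠ v → ∀ t ∈ Finset.Icc 1 T, 0 ≤ ξ1 u v t)
    (ξ2 : ℕ → ℝ) (hξ2 : ∀ t ∈ Finset.Icc 2 T, 0 ≤ ξ2 t) (hξ21 : ξ2 1 = 0)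
    (hξ2T1 : ξ2 (T + 1) = 0)
    (Θhat : ℕ → Matrix (Fin p) (Fin p) ℝ)
    (hPD : ∀ t ∈ Finset.Icc 1 T, (Θhat t).PosDef)
    (hmin : ∀ Θ : ℕ → Matrix (Fin p) (Fin p) ℝ,
      (∀ t ∈ Finset.Icc 1 T, (Θ t).PosDef) →
      gflslA p T X lam1 lam2 ξ1 ξ2 Θhat ≤ gflslA p T X lam1 lam2 ξ1 ξ2 Θ)
    (s t : ℕ) (hs : 1 ≤ s) (hst : s < t) (ht : t ≤ T + 1)
    (Sighat : Matrix (Fin p) (Fin p) ℝ)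
    (hconst : ∀ r ∈ Finset.Icc s (t - 1), Θhat r = Sighat) :
    frob (Sighat - (1 / ((t : ℝ) - (s : ℝ))) •
        ∑ r ∈ Finset.Icc s (t - 1), Matrix.vecMulVec (X r) (X r))
      ≤ ((T : ℝ) / ((t : ℝ) - (s : ℝ))) * lam2 * (ξ2 s + ξ2 t)
        + lam1 * (T : ℝ) * Real.sqrt ((p : ℝ) * ((p : ℝ) - 1)) *
          (⨆ r ∈ Finset.Icc s (t - 1), ⨆ u : Fin p, ⨆ v : Fin p,
            ⨆ _ : u ≠ v, ξ1 u v r) := by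
  classical
  -- basic index facts
  have hsle : s ≤ t - 1 := by omega
  have ht1T : t - 1 ≤ T := by omega
  set B := Finset.Icc s (t - 1) with hB
  have hsB : s ∈ B := Finset.mem_Icc.mpr ⟨le_rfl, hsle⟩
  have ht1B : t - 1 ∈ B := Finset.mem_Icc.mpr ⟨hsle, le_rfl⟩
  have hBsub : B ⊆ Finset.Icc 1 T := by
    intro r hr
    rw [hB, Finset.mem_Icc] at hr
    rw [Finset.mem_Icc]
    omega
  have hsmem : s ∈ Finset.Icc 1 T := hBsub hsB
  -- real scalars
  set nR : ℝ := (t : ℝ) - (s : ℝ) with hnR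
  have hnR_pos : 0 < nR := by
    rw [hnR]
    have : (s : ℝ) < (t : ℝ) := Nat.cast_lt.mpr hst
    linarith
  have hnR0 : nR ≠ 0 := ne_of_gt hnR_pos
  have hT0 : (0 : ℝ) < (T : ℝ) := by exact_mod_cast Nat.pos_of_ne_zero (by omega)
  have hcardR : (B.card : ℝ) = nR := by
    rw [hB, Nat.card_Icc]
    rw [show t - 1 + 1 - s = t - s by omega]
    rw [Nat.cast_sub hst.le, hnR]
  -- main objects
  set S : Matrix (Fin p) (Fin p) ℝ := ∑ r ∈ B, Matrix.vecMulVec (X r) (X r) with hS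
  set E : Matrix (Fin p) (Fin p) ℝ := Sighat - (1 / nR) • S with hE
  set Dm : Matrix (Fin p) (Fin p) ℝ := -E with hDm
  set F : ℝ := frob E with hF
  have hF0 : 0 ≤ F := frob_nonneg E
  have hEE : mip E E = F ^ 2 := mip_self_eq_frob_sq E
  set κv : ℝ := Real.sqrt ((p : ℝ) * ((p : ℝ) - 1)) with hκv
  have hκv0 : 0 ≤ κv := Real.sqrt_nonneg _
  set M : ℝ := ⨆ r ∈ B, ⨆ u : Fin p, ⨆ v : Fin p, ⨆ _ : u ≠ v, ξ1 u v r with hM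
  -- nonnegativity of weights
  have hξ2s : 0 ≤ ξ2 s := by
    by_cases h : s ∈ Finset.Icc 2 T
    · exact hξ2 s h
    · have : s = 1 := by rw [Finset.mem_Icc] at h; omega
      rw [this, hξ21]
  have hξ2t : 0 ≤ ξ2 t := by
    by_cases h : t ∈ Finset.Icc 2 T
    · exact hξ2 t h
    · have : t = T + 1 := by rw [Finset.mem_Icc] at h; omega
      rw [this, hξ2T1]
  -- facts about the supremum M
  have hM0 : 0 ≤ M := by
    rw [hM]
    refine Real.iSup_nonneg fun r => Real.iSup_nonneg fun hr => Real.iSup_nonneg fun u =>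
      Real.iSup_nonneg fun v => Real.iSup_nonneg fun huv => hξ1 u v huv r (hBsub hr)
  have hMr : ∀ r ∈ B, ∀ u v : Fin p, u ≠ v → ξ1 u v r ≤ M := by
    intro r hr u v huv
    have h1 : ξ1 u v r ≤ ⨆ u : Fin p, ⨆ v : Fin p, ⨆ _ : u ≠ v, ξ1 u v r := by
      calc ξ1 u v r = ⨆ _ : u ≠ v, ξ1 u v r := (ciSup_pos (f := fun _ => ξ1 u v r) huv).symm
        _ ≤ ⨆ v : Fin p, ⨆ _ : u ≠ v, ξ1 u v r :=
            le_ciSup (f := fun v : Fin p => ⨆ _ : u ≠ v, ξ1 u v r)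
              (Set.Finite.bddAbove (Set.finite_range _)) v
        _ ≤ ⨆ u : Fin p, ⨆ v : Fin p, ⨆ _ : u ≠ v, ξ1 u v r :=
            le_ciSup (f := fun u : Fin p => ⨆ v : Fin p, ⨆ _ : u ≠ v, ξ1 u v r)
              (Set.Finite.bddAbove (Set.finite_range _)) u
    set g : ℕ → ℝ := fun r => ⨆ u : Fin p, ⨆ v : Fin p, ⨆ _ : u ≠ v, ξ1 u v r with hg
    have hbd : BddAbove (Set.range fun r' => ⨆ _ : r' ∈ B, g r') := by
      refine ⟨(B.sup' ⟨s, hsB⟩ g) ⊔ 0, ?_⟩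
      rintro x ⟨r', rfl⟩
      by_cases h : r' ∈ B
      · show (⨆ _ : r' ∈ B, g r') ≤ _
        rw [ciSup_pos (f := fun _ => g r') h]
        exact le_sup_of_le_left (Finset.le_sup' g h)
      · show (⨆ _ : r' ∈ B, g r') ≤ _
        haveI : IsEmpty (r' ∈ B) := ⟨h⟩
        rw [Real.iSup_of_isEmpty (fun _ : r' ∈ B => g r')]
        exact le_sup_right
    calc ξ1 u v r ≤ g r := h1
      _ = ⨆ _ : r ∈ B, g r := (ciSup_pos (f := fun _ => g r) hr).symm
      _ ≤ ⨆ r' : ℕ, ⨆ _ : r' ∈ B, g r' := le_ciSup hbd r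
      _ = M := by rw [hM]
  -- positive definiteness facts
  have hSig : Sighat.PosDef := by
    have h := hPD s hsmem
    rwa [hconst s hsB] at h
  have hSpsd : S.PosSemidef := by
    rw [hS]
    refine Finset.sum_induction _ _ (fun a b ha hb => ha.add hb) Matrix.PosSemidef.zero ?_
    exact fun r _ => posSemidef_vecMulVec (X r)
  -- the perturbed family
  set Θe : ℝ → ℕ → Matrix (Fin p) (Fin p) ℝ :=
    fun ε r => Θhat r + (if r ∈ B then ε • Dm else 0) with hΘe
  have hΘe_mem : ∀ (ε : ℝ) (r : ℕ), r ∈ B → Θe ε r = Sighat + ε • Dm := by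
    intro ε r hr
    rw [hΘe]
    simp only
    rw [if_pos hr, hconst r hr]
  have hΘe_nmem : ∀ (ε : ℝ) (r : ℕ), r ∉ B → Θe ε r = Θhat r := by
    intro ε r hr
    rw [hΘe]
    simp only
    rw [if_neg hr, add_zero]
  have hdecomp : ∀ ε : ℝ, Sighat + ε • Dm = (1 - ε) • Sighat + (ε / nR) • S := by
    intro ε
    rw [hDm, hE]
    rw [smul_neg, smul_sub, smul_smul, sub_smul, one_smul]
    rw [show ε * (1 / nR) = ε / nR by ring]
    abel
  have hPDe : ∀ ε : ℝ, 0 < ε → ε < 1 → ∀ r ∈ Finset.Icc 1 T, (Θe ε r).PosDef := by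
    intro ε hε hε1 r hr
    by_cases hrB : r ∈ B
    · rw [hΘe_mem ε r hrB, hdecomp ε]
      exact (posDef_smul hSig (by linarith)).add_posSemidef
        (posSemidef_smul hSpsd (by positivity))
    · rw [hΘe_nmem ε r hrB]
      exact hPD r hr
  -- splitting sums over the block
  have hsd : ∀ g : ℕ → ℝ,
      ∑ r ∈ Finset.Icc 1 T, g r = ∑ r ∈ Finset.Icc 1 T \ B, g r + ∑ r ∈ B, g r :=
    fun g => (Finset.sum_sdiff hBsub).symm
  have hLoff : (∑ u, ∑ v, (if u ≠ v then |E u v| else 0)) ≤ κv * F := by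
    rw [hκv, hF]; exact sum_offdiag_abs_le E
  -- the key perturbation inequality
  have hkey : ∀ ε : ℝ, 0 < ε → ε < 1 →
      gflslA p T X lam1 lam2 ξ1 ξ2 (Θe ε)
        ≤ gflslA p T X lam1 lam2 ξ1 ξ2 Θhat
          + (1 / (2 * (T : ℝ))) * (nR * ((ε ^ 2 - 2 * ε) * F ^ 2))
          + lam1 * (nR * (ε * (M * (κv * F))))
          + lam2 * ((ξ2 s + ξ2 t) * (ε * F)) := by
    intro ε hε hε1
    -- quadratic part (exact)
    have hQ : (∑ r ∈ Finset.Icc 1 T,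
          ((Θe ε r)ᵀ * Θe ε r - (Matrix.vecMulVec (X r) (X r))ᵀ * Θe ε r
            - (Θe ε r)ᵀ * Matrix.vecMulVec (X r) (X r)).trace)
        = (∑ r ∈ Finset.Icc 1 T,
          ((Θhat r)ᵀ * Θhat r - (Matrix.vecMulVec (X r) (X r))ᵀ * Θhat r
            - (Θhat r)ᵀ * Matrix.vecMulVec (X r) (X r)).trace)
          + nR * ((ε ^ 2 - 2 * ε) * F ^ 2) := by
      rw [hsd, hsd]
      have h1 : (∑ r ∈ Finset.Icc 1 T \ B,
            ((Θe ε r)ᵀ * Θe ε r - (Matrix.vecMulVec (X r) (X r))ᵀ * Θe ε r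
              - (Θe ε r)ᵀ * Matrix.vecMulVec (X r) (X r)).trace)
          = (∑ r ∈ Finset.Icc 1 T \ B,
            ((Θhat r)ᵀ * Θhat r - (Matrix.vecMulVec (X r) (X r))ᵀ * Θhat r
              - (Θhat r)ᵀ * Matrix.vecMulVec (X r) (X r)).trace) :=
        Finset.sum_congr rfl fun r hr => by
          rw [hΘe_nmem ε r (Finset.mem_sdiff.mp hr).2]
      have h2a : ∀ r ∈ B,
          ((Θe ε r)ᵀ * Θe ε r - (Matrix.vecMulVec (X r) (X r))ᵀ * Θe ε r
            - (Θe ε r)ᵀ * Matrix.vecMulVec (X r) (X r)).trace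
          = ((Θhat r)ᵀ * Θhat r - (Matrix.vecMulVec (X r) (X r))ᵀ * Θhat r
            - (Θhat r)ᵀ * Matrix.vecMulVec (X r) (X r)).trace
            + (2 * ε * mip Sighat Dm + ε ^ 2 * mip Dm Dm
              - 2 * ε * mip (Matrix.vecMulVec (X r) (X r)) Dm) := by
        intro r hr
        rw [hΘe_mem ε r hr, hconst r hr, trace_expand, trace_expand]
        exact mip_quad Sighat Dm _ ε
      have h2b : (∑ r ∈ B, (2 * ε * mip Sighat Dm + ε ^ 2 * mip Dm Dm
            - 2 * ε * mip (Matrix.vecMulVec (X r) (X r)) Dm))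
          = nR * ((ε ^ 2 - 2 * ε) * F ^ 2) := by
        rw [Finset.sum_sub_distrib, Finset.sum_const, ← Finset.mul_sum, ← mip_sum_left, ← hS,
          nsmul_eq_mul, hcardR]
        have e1 : mip Sighat Dm = -(F ^ 2) + (1 / nR) * mip S Dm := by
          have hSig_eq : Sighat = E + (1 / nR) • S := by rw [hE]; abel
          rw [hSig_eq, mip_add_left, mip_smul_left]
          simp only [hDm, mip_neg_right]
          rw [hEE]
        have e2 : mip Dm Dm = F ^ 2 := by
          simp only [hDm, mip_neg_left, mip_neg_right, neg_neg]; exact hEE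
        rw [e1, e2]
        field_simp
        ring
      rw [h1, Finset.sum_congr rfl h2a, Finset.sum_add_distrib, h2b]
      ring
    -- lasso part
    have hL : (∑ r ∈ Finset.Icc 1 T, ∑ u, ∑ v,
          (if u ≠ v then ξ1 u v r * |Θe ε r u v| else 0))
        ≤ (∑ r ∈ Finset.Icc 1 T, ∑ u, ∑ v,
          (if u ≠ v then ξ1 u v r * |Θhat r u v| else 0))
          + nR * (ε * (M * (κv * F))) := by
      rw [hsd, hsd]
      have h1 : (∑ r ∈ Finset.Icc 1 T \ B, ∑ u, ∑ v,
            (if u ≠ v then ξ1 u v r * |Θe ε r u v| else 0))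
          = (∑ r ∈ Finset.Icc 1 T \ B, ∑ u, ∑ v,
            (if u ≠ v then ξ1 u v r * |Θhat r u v| else 0)) :=
        Finset.sum_congr rfl fun r hr => by
          rw [hΘe_nmem ε r (Finset.mem_sdiff.mp hr).2]
      have h2a : ∀ r ∈ B, (∑ u, ∑ v, (if u ≠ v then ξ1 u v r * |Θe ε r u v| else 0))
          ≤ (∑ u, ∑ v, (if u ≠ v then ξ1 u v r * |Θhat r u v| else 0))
            + ε * M * (κv * F) := by
        intro r hr
        rw [hΘe_mem ε r hr, hconst r hr]
        have entry : ∀ u v : Fin p,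
            (if u ≠ v then ξ1 u v r * |(Sighat + ε • Dm) u v| else 0)
            ≤ (if u ≠ v then ξ1 u v r * |Sighat u v| else 0)
              + ε * M * (if u ≠ v then |E u v| else 0) := by
          intro u v
          by_cases h : u ≠ v
          · rw [if_pos h, if_pos h, if_pos h]
            have habs : |(Sighat + ε • Dm) u v| ≤ |Sighat u v| + ε * |E u v| := by
              have hDE : (Sighat + ε • Dm) u v = Sighat u v + ε * Dm u v := by
                simp [Matrix.add_apply, Matrix.smul_apply]
              rw [hDE]
              calc |Sighat u v + ε * Dm u v| ≤ |Sighat u v| + |ε * Dm u v| := abs_add_le _ _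
                _ = |Sighat u v| + ε * |E u v| := by
                    rw [abs_mul, abs_of_pos hε, hDm]
                    simp [Matrix.neg_apply, abs_neg]
            have hξ0 : 0 ≤ ξ1 u v r := hξ1 u v h r (hBsub hr)
            have hξM : ξ1 u v r ≤ M := hMr r hr u v h
            have hE0 : 0 ≤ |E u v| := abs_nonneg _
            nlinarith [mul_le_mul_of_nonneg_left habs hξ0,
              mul_le_mul_of_nonneg_right hξM (mul_nonneg hε.le hE0)]
          · rw [if_neg h, if_neg h, if_neg h]; simp
        calc (∑ u, ∑ v, (if u ≠ v then ξ1 u v r * |(Sighat + ε • Dm) u v| else 0))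
            ≤ ∑ u, ∑ v, ((if u ≠ v then ξ1 u v r * |Sighat u v| else 0)
                + ε * M * (if u ≠ v then |E u v| else 0)) :=
              Finset.sum_le_sum fun u _ => Finset.sum_le_sum fun v _ => entry u v
          _ = (∑ u, ∑ v, (if u ≠ v then ξ1 u v r * |Sighat u v| else 0))
                + ε * M * (∑ u, ∑ v, (if u ≠ v then |E u v| else 0)) := by
              simp only [Finset.sum_add_distrib, ← Finset.mul_sum]
          _ ≤ (∑ u, ∑ v, (if u ≠ v then ξ1 u v r * |Sighat u v| else 0))
                + ε * M * (κv * F) := by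
              have := mul_le_mul_of_nonneg_left hLoff (mul_nonneg hε.le hM0)
              linarith
      have h2 : (∑ r ∈ B, ∑ u, ∑ v, (if u ≠ v then ξ1 u v r * |Θe ε r u v| else 0))
          ≤ (∑ r ∈ B, ∑ u, ∑ v, (if u ≠ v then ξ1 u v r * |Θhat r u v| else 0))
            + nR * (ε * (M * (κv * F))) := by
        calc (∑ r ∈ B, ∑ u, ∑ v, (if u ≠ v then ξ1 u v r * |Θe ε r u v| else 0))
            ≤ ∑ r ∈ B, ((∑ u, ∑ v, (if u ≠ v then ξ1 u v r * |Θhat r u v| else 0))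
                + ε * M * (κv * F)) := Finset.sum_le_sum h2a
          _ = (∑ r ∈ B, ∑ u, ∑ v, (if u ≠ v then ξ1 u v r * |Θhat r u v| else 0))
                + B.card • (ε * M * (κv * F)) := by
              rw [Finset.sum_add_distrib, Finset.sum_const]
          _ = (∑ r ∈ B, ∑ u, ∑ v, (if u ≠ v then ξ1 u v r * |Θhat r u v| else 0))
                + nR * (ε * (M * (κv * F))) := by
              rw [nsmul_eq_mul, hcardR]; ring
      linarith
    -- fused part
    have hεF : frob (ε • Dm) = ε * F := by
      rw [frob_smul, abs_of_pos hε, hDm, frob_neg, hF]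
    have hFu : (∑ r ∈ Finset.Icc 2 T, ξ2 r * frob (Θe ε r - Θe ε (r - 1)))
        ≤ (∑ r ∈ Finset.Icc 2 T, ξ2 r * frob (Θhat r - Θhat (r - 1)))
          + (ξ2 s + ξ2 t) * (ε * F) := by
      have hterm : ∀ r ∈ Finset.Icc 2 T,
          ξ2 r * frob (Θe ε r - Θe ε (r - 1))
            ≤ ξ2 r * frob (Θhat r - Θhat (r - 1))
              + ((if r = s then ξ2 s * (ε * F) else 0)
                + (if r = t then ξ2 t * (ε * F) else 0)) := by
        intro r hr
        have hr2 := Finset.mem_Icc.mp hr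
        have hξ2r : 0 ≤ ξ2 r := hξ2 r hr
        have hεF0 : 0 ≤ ε * F := mul_nonneg hε.le hF0
        by_cases hrB : r ∈ B <;> by_cases hr1B : r - 1 ∈ B
        · have h1 := Finset.mem_Icc.mp hrB
          have h2 := Finset.mem_Icc.mp hr1B
          have hrs : r ≠ s := by omega
          have hrt : r ≠ t := by omega
          have heq : Θe ε r - Θe ε (r - 1) = Θhat r - Θhat (r - 1) := by
            rw [hΘe]; simp only; rw [if_pos hrB, if_pos hr1B]; abel
          rw [heq, if_neg hrs, if_neg hrt]
          simp
        · have h1 := Finset.mem_Icc.mp hrB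
          have h2 : ¬(s ≤ r - 1 ∧ r - 1 ≤ t - 1) := fun hc => hr1B (Finset.mem_Icc.mpr hc)
          have hrs : r = s := by omega
          have hrt : r ≠ t := by omega
          have heq : Θe ε r - Θe ε (r - 1) = (Θhat r - Θhat (r - 1)) + ε • Dm := by
            rw [hΘe]; simp only; rw [if_pos hrB, if_neg hr1B]; abel
          rw [heq, if_pos hrs, if_neg hrt, ← hrs]
          have h3 := frob_add_le (Θhat r - Θhat (r - 1)) (ε • Dm)
          rw [hεF] at h3
          have h4 := mul_le_mul_of_nonneg_left h3 hξ2r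
          linarith
        · have h1 : ¬(s ≤ r ∧ r ≤ t - 1) := fun hc => hrB (Finset.mem_Icc.mpr hc)
          have h2 := Finset.mem_Icc.mp hr1B
          have hrt : r = t := by omega
          have hrs : r ≠ s := by omega
          have heq : Θe ε r - Θe ε (r - 1) = (Θhat r - Θhat (r - 1)) - ε • Dm := by
            rw [hΘe]; simp only; rw [if_neg hrB, if_pos hr1B]; abel
          rw [heq, if_neg hrs, if_pos hrt, ← hrt]
          have h3 := frob_sub_le (Θhat r - Θhat (r - 1)) (ε • Dm)
          rw [hεF] at h3
          have h4 := mul_le_mul_of_nonneg_left h3 hξ2r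
          linarith
        · have hrs : r ≠ s := fun h => hrB (h ▸ hsB)
          have hrt : r ≠ t := fun h => hr1B (by rw [h]; exact ht1B)
          have heq : Θe ε r - Θe ε (r - 1) = Θhat r - Θhat (r - 1) := by
            rw [hΘe]; simp only; rw [if_neg hrB, if_neg hr1B]; abel
          rw [heq, if_neg hrs, if_neg hrt]
          simp
      calc (∑ r ∈ Finset.Icc 2 T, ξ2 r * frob (Θe ε r - Θe ε (r - 1)))
          ≤ ∑ r ∈ Finset.Icc 2 T, (ξ2 r * frob (Θhat r - Θhat (r - 1))
              + ((if r = s then ξ2 s * (ε * F) else 0)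
                + (if r = t then ξ2 t * (ε * F) else 0))) := Finset.sum_le_sum hterm
        _ = (∑ r ∈ Finset.Icc 2 T, ξ2 r * frob (Θhat r - Θhat (r - 1)))
              + ((∑ r ∈ Finset.Icc 2 T, if r = s then ξ2 s * (ε * F) else 0)
                + (∑ r ∈ Finset.Icc 2 T, if r = t then ξ2 t * (ε * F) else 0)) := by
            rw [Finset.sum_add_distrib, Finset.sum_add_distrib]
        _ = (∑ r ∈ Finset.Icc 2 T, ξ2 r * frob (Θhat r - Θhat (r - 1)))
              + (ξ2 s + ξ2 t) * (ε * F) := by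
            rw [Finset.sum_ite_eq' (Finset.Icc 2 T) s (fun _ => ξ2 s * (ε * F)),
              Finset.sum_ite_eq' (Finset.Icc 2 T) t (fun _ => ξ2 t * (ε * F))]
            have e1 : (if s ∈ Finset.Icc 2 T then ξ2 s * (ε * F) else 0) = ξ2 s * (ε * F) := by
              by_cases h : s ∈ Finset.Icc 2 T
              · rw [if_pos h]
              · have hs1 : s = 1 := by rw [Finset.mem_Icc] at h; omega
                rw [if_neg h, hs1, hξ21, zero_mul]
            have e2 : (if t ∈ Finset.Icc 2 T then ξ2 t * (ε * F) else 0) = ξ2 t * (ε * F) := by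
              by_cases h : t ∈ Finset.Icc 2 T
              · rw [if_pos h]
              · have ht1 : t = T + 1 := by rw [Finset.mem_Icc] at h; omega
                rw [if_neg h, ht1, hξ2T1, zero_mul]
            rw [e1, e2]; ring
    -- assemble
    simp only [gflslA]
    rw [hQ]
    have hL' := mul_le_mul_of_nonneg_left hL hlam1
    have hF' := mul_le_mul_of_nonneg_left hFu hlam2.le
    refine le_trans (add_le_add (add_le_add le_rfl hL') hF') (le_of_eq ?_)
    ring
  -- deduce the first-order inequality by minimality
  have hmain : ∀ ε : ℝ, 0 < ε → ε < 1 →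
      0 ≤ (1 / (2 * (T : ℝ))) * (nR * ((ε ^ 2 - 2 * ε) * F ^ 2))
        + lam1 * (nR * (ε * (M * (κv * F))))
        + lam2 * ((ξ2 s + ξ2 t) * (ε * F)) := by
    intro ε hε hε1
    have h1 := hmin (Θe ε) (hPDe ε hε hε1)
    have h2 := hkey ε hε hε1
    linarith
  set C1 : ℝ := lam1 * (nR * (M * (κv * F))) + lam2 * ((ξ2 s + ξ2 t) * F) with hC1
  set c2 : ℝ := nR / (2 * (T : ℝ)) * F ^ 2 with hc2
  have hc20 : 0 ≤ c2 := by
    rw [hc2]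
    have : (0:ℝ) ≤ F ^ 2 := sq_nonneg _
    positivity
  have hstep : ∀ ε : ℝ, 0 < ε → ε < 1 → nR / (T : ℝ) * F ^ 2 ≤ C1 + ε * c2 := by
    intro ε hε hε1
    have h0 := hmain ε hε hε1
    have hh : 0 ≤ (1 / (2 * (T : ℝ))) * (nR * ((ε - 2) * F ^ 2))
        + lam1 * (nR * (M * (κv * F))) + lam2 * ((ξ2 s + ξ2 t) * F) := by
      have hmul : ε * ((1 / (2 * (T : ℝ))) * (nR * ((ε - 2) * F ^ 2))
          + lam1 * (nR * (M * (κv * F))) + lam2 * ((ξ2 s + ξ2 t) * F))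
          = (1 / (2 * (T : ℝ))) * (nR * ((ε ^ 2 - 2 * ε) * F ^ 2))
            + lam1 * (nR * (ε * (M * (κv * F))))
            + lam2 * ((ξ2 s + ξ2 t) * (ε * F)) := by ring
      rw [← hmul] at h0
      have h3 : ε * 0 ≤ ε * ((1 / (2 * (T : ℝ))) * (nR * ((ε - 2) * F ^ 2))
          + lam1 * (nR * (M * (κv * F))) + lam2 * ((ξ2 s + ξ2 t) * F)) := by
        rw [mul_zero]; exact h0
      exact le_of_mul_le_mul_left h3 hε
    rw [hC1, hc2]
    have hT0' : (T : ℝ) ≠ 0 := ne_of_gt hT0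
    have hexp : (1 / (2 * (T : ℝ))) * (nR * ((ε - 2) * F ^ 2))
        = ε * (nR / (2 * (T : ℝ)) * F ^ 2) - nR / (T : ℝ) * F ^ 2 := by
      field_simp
    rw [hexp] at hh
    linarith
  have hfin : nR / (T : ℝ) * F ^ 2 ≤ C1 := by
    refine le_of_forall_pos_le_add fun η hη => ?_
    have hc21 : (0:ℝ) < c2 + 1 := by linarith
    have hε0 : 0 < min (1/2 : ℝ) (η / (c2 + 1)) := lt_min (by norm_num) (div_pos hη hc21)
    have hε1 : min (1/2 : ℝ) (η / (c2 + 1)) < 1 :=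
      lt_of_le_of_lt (min_le_left _ _) (by norm_num)
    have h5 : min (1/2 : ℝ) (η / (c2 + 1)) ≤ η / (c2 + 1) := min_le_right _ _
    have h6 : min (1/2 : ℝ) (η / (c2 + 1)) * c2 ≤ η / (c2 + 1) * c2 :=
      mul_le_mul_of_nonneg_right h5 hc20
    have h7 : η / (c2 + 1) * c2 ≤ η := by
      rw [div_mul_eq_mul_div, div_le_iff₀ hc21]
      nlinarith
    linarith [hstep _ hε0 hε1]
  -- conclude
  rcases eq_or_lt_of_le hF0 with hF_eq | hF_pos
  · rw [← hF_eq]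
    have hle1 : (0:ℝ) ≤ (T : ℝ) / nR * lam2 * (ξ2 s + ξ2 t) :=
      mul_nonneg (mul_nonneg (div_nonneg hT0.le hnR_pos.le) hlam2.le) (add_nonneg hξ2s hξ2t)
    have hle2 : (0:ℝ) ≤ lam1 * (T : ℝ) * κv * M :=
      mul_nonneg (mul_nonneg (mul_nonneg hlam1 hT0.le) hκv0) hM0
    linarith
  · have key : F * (nR / (T : ℝ) * F)
        ≤ ((T : ℝ) / nR * lam2 * (ξ2 s + ξ2 t) + lam1 * (T : ℝ) * κv * M)
          * (nR / (T : ℝ) * F) := by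
      have e1 : F * (nR / (T : ℝ) * F) = nR / (T : ℝ) * F ^ 2 := by ring
      have e2 : ((T : ℝ) / nR * lam2 * (ξ2 s + ξ2 t) + lam1 * (T : ℝ) * κv * M)
          * (nR / (T : ℝ) * F) = C1 := by
        rw [hC1]
        have hT0' : (T : ℝ) ≠ 0 := ne_of_gt hT0
        field_simp
        ring
      rw [e1, e2]
      exact hfin
    have hpos : 0 < nR / (T : ℝ) * F := by positivity
    exact le_of_mul_le_mul_right key hpos
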